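/- Periodic ground energy density lower-bounds the translation-invariant relaxation: let h be a Hermitian operator on ℂ^d ⊗ ℂ^d, and for m ≥ 2 let H_m = Σ_{i=1}^m h_{i,i+1} be the periodic-chain Hamiltonian on (ℂ^d)^{⊗m}, where h_{i,i+1} acts as h on sites i and i+1 (with site m+1 identified with site 1) and as the identity elsewhere. Then (1/m)·λ_min(H_m) ≥ E_m, where λ_min denotes the smallest eigenvalue and E_m = min{ Tr[h ρ_{12}] : ρ a density operator on (ℂ^d)^{⊗m} with Tr_1[ρ] = Tr_m[ρ] }. -/

import Mathlib

open scoped Matrix ComplexOrder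

noncomputable section

def IsDensityOp {n : Type*} [Fintype n] [DecidableEq n] (ρ : Matrix n n ℂ) : Prop :=
  ρ.PosSemidef ∧ ρ.trace = 1

/-- Von Neumann entropy of a (Hermitian) matrix: `-∑ λᵢ log λᵢ`. -/
noncomputable def vNE {n : Type*} [Fintype n] [DecidableEq n] (ρ : Matrix n n ℂ) : ℝ :=
  if h : ρ.IsHermitian then -∑ i, h.eigenvalues i * Real.log (h.eigenvalues i) else 0

/-- Marginal of a state on the chain `Fin m` (sites `0,…,m-1`) on the window of `j`
consecutive sites `{t,…,t+j-1}`, tracing out all other sites. -/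
noncomputable def margW {m d : ℕ} (t j : ℕ)
    (ρ : Matrix (Fin m → Fin d) (Fin m → Fin d) ℂ) :
    Matrix (Fin j → Fin d) (Fin j → Fin d) ℂ :=
  Matrix.of fun f g => ∑ k : ({x : Fin m // x.1 < t ∨ t + j ≤ x.1} → Fin d),
    ρ (fun x => if h : t ≤ x.1 ∧ x.1 < t + j then f ⟨x.1 - t, by omega⟩ else k ⟨x, by omega⟩)
      (fun x => if h : t ≤ x.1 ∧ x.1 < t + j then g ⟨x.1 - t, by omega⟩ else k ⟨x, by omega⟩)

/-- The two-body marginal `ρ_{12}` on the first two sites of a chain state, as a matrix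
indexed by `Fin d × Fin d`. -/
noncomputable def marg12 {m d : ℕ} (ρ : Matrix (Fin m → Fin d) (Fin m → Fin d) ℂ) :
    Matrix (Fin d × Fin d) (Fin d × Fin d) ℂ :=
  Matrix.of fun p q => margW 0 2 ρ ![p.1, p.2] ![q.1, q.2]

/-- `E_m`: the optimal value of the translation-invariant marginal relaxation at level `m`:
the minimum of `Tr[h ρ_{12}]` over density operators `ρ` on `(ℂ^d)^{⊗m}` whose first-site
and last-site partial traces coincide. -/
noncomputable def Em (d m : ℕ) (h : Matrix (Fin d × Fin d) (Fin d × Fin d) ℂ) : ℝ :=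
  sInf { x : ℝ | ∃ ρ : Matrix (Fin m → Fin d) (Fin m → Fin d) ℂ,
    IsDensityOp ρ ∧ margW 1 (m - 1) ρ = margW 0 (m - 1) ρ ∧
    x = (Matrix.trace (h * marg12 ρ)).re }

/-- The cyclic successor of a site on the periodic chain `Fin m`. -/
def nextS {m : ℕ} (i : Fin m) : Fin m := ⟨(i.1 + 1) % m, Nat.mod_lt _ i.pos⟩

/-- The local Hamiltonian term `h_{i,i+1}` acting as `h` on the (cyclically consecutive)
sites `i, i+1` of the periodic chain `Fin m` and as the identity elsewhere. -/
noncomputable def hterm (d : ℕ) {m : ℕ} (h : Matrix (Fin d × Fin d) (Fin d × Fin d) ℂ)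
    (i : Fin m) : Matrix (Fin m → Fin d) (Fin m → Fin d) ℂ :=
  Matrix.of fun f g =>
    if ∀ x : Fin m, x ≠ i → x ≠ nextS i → f x = g x then
      h (f i, f (nextS i)) (g i, g (nextS i)) else 0

/-- The smallest eigenvalue of a (Hermitian) matrix. -/
noncomputable def lamMin {n : Type*} [Fintype n] [DecidableEq n] (M : Matrix n n ℂ) : ℝ :=
  if h : M.IsHermitian then ⨅ i, h.eigenvalues i else 0

end

section AuxLemmas

open Matrix

private lemma lamMin_le_trace_re {n : Type*} [Fintype n] [DecidableEq n]
    {M ρ : Matrix n n ℂ} (hM : M.IsHermitian) (hρ : IsDensityOp ρ) :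
    lamMin M ≤ (Matrix.trace (M * ρ)).re := by
  have hne : Nonempty n := by
    by_contra hemp
    rw [not_nonempty_iff] at hemp
    have h1 := hρ.2
    rw [Matrix.trace] at h1
    simp [Finset.univ_eq_empty] at h1
  classical
  set U : Matrix n n ℂ := (hM.eigenvectorUnitary : Matrix n n ℂ) with hU
  set σ : Matrix n n ℂ := Uᴴ * ρ * U with hσ
  have hσpsd : σ.PosSemidef := hρ.1.conjTranspose_mul_mul_same U
  have hUU : U * Uᴴ = 1 := by
    have := Matrix.mem_unitaryGroup_iff.mp hM.eigenvectorUnitary.2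
    simpa [Matrix.star_eq_conjTranspose] using this
  have htrσ : σ.trace = 1 := by
    rw [hσ, Matrix.trace_mul_cycle, hUU, Matrix.one_mul, hρ.2]
  have hkey : Matrix.trace (M * ρ) = ∑ i, (hM.eigenvalues i : ℂ) * σ i i := by
    conv_lhs => rw [hM.spectral_theorem, Unitary.conjStarAlgAut_apply]
    rw [show (U * Matrix.diagonal (RCLike.ofReal ∘ hM.eigenvalues) * star U) * ρ
          = U * (Matrix.diagonal (RCLike.ofReal ∘ hM.eigenvalues) * (star U * ρ)) by
        simp only [Matrix.mul_assoc]]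
    rw [Matrix.trace_mul_comm]
    simp only [Matrix.star_eq_conjTranspose, Matrix.mul_assoc, ← hσ]
    rw [← Matrix.mul_assoc]
    simp [Matrix.trace, Matrix.diag, Matrix.diagonal_mul, hσ, Matrix.mul_assoc]
  have hdiag : ∀ i, 0 ≤ (σ i i).re ∧ (σ i i).im = 0 := by
    intro i
    have hxs : star ((Pi.single i 1 : n → ℂ)) = (Pi.single i 1 : n → ℂ) := by
      ext j; by_cases hj : j = i <;> simp [Pi.single_apply, hj]
    have h0 : (0:ℂ) ≤ σ i i := by
      have h2 := hσpsd.dotProduct_mulVec_nonneg ((Pi.single i 1 : n → ℂ))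
      rw [hxs] at h2
      simpa [Matrix.mulVec_single, single_dotProduct] using h2
    have := Complex.nonneg_iff.mp h0
    exact ⟨this.1, this.2.symm⟩
  have hsum1 : ∑ i, (σ i i).re = 1 := by
    have := congrArg Complex.re htrσ
    rw [Matrix.trace] at this
    simpa [Complex.re_sum, Matrix.diag] using this
  have hlam : ∀ i, lamMin M ≤ hM.eigenvalues i := by
    intro i
    simp only [lamMin, dif_pos hM]
    exact ciInf_le (Finite.bddBelow_range _) i
  calc lamMin M = ∑ i, lamMin M * (σ i i).re := by rw [← Finset.mul_sum, hsum1, mul_one]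
    _ ≤ ∑ i, hM.eigenvalues i * (σ i i).re :=
        Finset.sum_le_sum fun i _ => mul_le_mul_of_nonneg_right (hlam i) (hdiag i).1
    _ = (Matrix.trace (M * ρ)).re := by
        rw [hkey, Complex.re_sum]
        exact Finset.sum_congr rfl fun i _ => (Complex.re_ofReal_mul _ _).symm

private lemma nextS_eq {m : ℕ} (hm : 2 ≤ m) [NeZero m] (j : Fin m) : nextS j = j + 1 := by
  apply Fin.ext
  rw [Fin.add_def]
  simp only [nextS, Fin.val_one']
  rw [Nat.mod_eq_of_lt (show 1 < m by omega)]

private lemma hterm_herm {d m : ℕ} {h : Matrix (Fin d × Fin d) (Fin d × Fin d) ℂ}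
    (hh : h.IsHermitian) (i : Fin m) : (hterm d h i).IsHermitian := by
  ext f g
  simp only [Matrix.conjTranspose_apply, hterm, Matrix.of_apply]
  by_cases hc : ∀ x, x ≠ i → x ≠ nextS i → f x = g x
  · rw [if_pos (fun x h1 h2 => (hc x h1 h2).symm), if_pos hc]
    conv_rhs => rw [← hh]
    simp [Matrix.conjTranspose_apply]
  · rw [if_neg (fun hc' => hc (fun x h1 h2 =>
      ((hc' : ∀ x, x ≠ i → x ≠ nextS i → g x = f x) x h1 h2).symm)), if_neg hc, star_zero]

private lemma hterm_cov {d m : ℕ} (hm : 2 ≤ m) [NeZero m]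
    (h : Matrix (Fin d × Fin d) (Fin d × Fin d) ℂ) (i s : Fin m) (f g : Fin m → Fin d) :
    hterm d h i (fun x => f (x + s)) (fun x => g (x + s)) = hterm d h (i + s) f g := by
  simp only [hterm, Matrix.of_apply]
  have hcond : (∀ x : Fin m, x ≠ i → x ≠ nextS i → f (x + s) = g (x + s)) ↔
      (∀ y : Fin m, y ≠ i + s → y ≠ nextS (i + s) → f y = g y) := by
    rw [nextS_eq hm, nextS_eq hm]
    constructor
    · intro H y hy1 hy2
      have h1 : y - s ≠ i := fun hc => hy1 (by rw [← sub_add_cancel y s, hc])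
      have h2 : y - s ≠ i + 1 := fun hc => hy2 (by rw [← sub_add_cancel y s, hc, add_right_comm])
      simpa [sub_add_cancel] using H (y - s) h1 h2
    · intro H x hx1 hx2
      refine H (x + s) (fun hc => hx1 (by simpa using congrArg (· - s) hc))
        (fun hc => hx2 ?_)
      have : x + s = (i + 1) + s := by rw [hc, add_right_comm]
      simpa using congrArg (· - s) this
  have hval : nextS i + s = nextS (i + s) := by
    rw [nextS_eq hm, nextS_eq hm, add_right_comm]
  by_cases hc : ∀ y : Fin m, y ≠ i + s → y ≠ nextS (i + s) → f y = g y
  · rw [if_pos (hcond.mpr hc), if_pos hc, hval]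
  · rw [if_neg (fun hx => hc (hcond.mp hx)), if_neg hc]

private def splitE (d m : ℕ) (hm : 2 ≤ m) :
    ((Fin d × Fin d) × ({x : Fin m // x.1 < 0 ∨ 0 + 2 ≤ x.1} → Fin d)) ≃ (Fin m → Fin d) where
  toFun z := fun x => if hx : 0 ≤ x.1 ∧ x.1 < 0 + 2 then ![z.1.1, z.1.2] ⟨x.1 - 0, by omega⟩
    else z.2 ⟨x, by omega⟩
  invFun f := ((f ⟨0, by omega⟩, f ⟨1, by omega⟩), fun x => f x.1)
  left_inv z := by
    obtain ⟨⟨p1, p2⟩, k⟩ := z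
    refine Prod.ext (Prod.ext ?_ ?_) (funext fun x => ?_) <;> simp only
    · rw [dif_pos (by simp : (0:ℕ) ≤ ((⟨0, by omega⟩ : Fin m) : ℕ) ∧
        ((⟨0, by omega⟩ : Fin m) : ℕ) < 0 + 2)]
      rfl
    · rw [dif_pos (by simp : (0:ℕ) ≤ ((⟨1, by omega⟩ : Fin m) : ℕ) ∧
        ((⟨1, by omega⟩ : Fin m) : ℕ) < 0 + 2)]
      simp
    · rw [dif_neg (by have := x.2; omega)]
  right_inv f := by
    funext x
    beta_reduce
    by_cases hx : (x : ℕ) < 2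
    · rw [dif_pos ⟨Nat.zero_le _, by omega⟩]
      have hx' : (x:ℕ) = 0 ∨ (x:ℕ) = 1 := by omega
      rcases hx' with h0 | h1
      · have hidx : (⟨(x:ℕ) - 0, by omega⟩ : Fin 2) = ⟨0, by omega⟩ := by
          apply Fin.ext; show (x:ℕ) - 0 = 0; omega
        rw [hidx]
        exact congrArg f (by apply Fin.ext; show (0:ℕ) = (x:ℕ); omega)
      · have hidx : (⟨(x:ℕ) - 0, by omega⟩ : Fin 2) = ⟨1, by omega⟩ := by
          apply Fin.ext; show (x:ℕ) - 0 = 1; omega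
        rw [hidx]
        exact congrArg f (by apply Fin.ext; show (1:ℕ) = (x:ℕ); omega)
    · rw [dif_neg (by omega)]

private lemma splitE_out {d m : ℕ} (hm : 2 ≤ m) (p : Fin d × Fin d)
    (k : {x : Fin m // x.1 < 0 ∨ 0 + 2 ≤ x.1} → Fin d)
    (x : {x : Fin m // x.1 < 0 ∨ 0 + 2 ≤ x.1}) :
    splitE d m hm (p, k) x.1 = k x := by
  simp only [splitE, Equiv.coe_fn_mk]
  rw [dif_neg (by have := x.2; omega)]

private lemma splitE_zero {d m : ℕ} (hm : 2 ≤ m) [NeZero m] (p : Fin d × Fin d)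
    (k : {x : Fin m // x.1 < 0 ∨ 0 + 2 ≤ x.1} → Fin d) :
    splitE d m hm (p, k) (0 : Fin m) = p.1 := by
  simp only [splitE, Equiv.coe_fn_mk]
  rw [dif_pos (by simp)]
  simp

private lemma nextS_zero {m : ℕ} (hm : 2 ≤ m) [NeZero m] :
    nextS (0 : Fin m) = ⟨1, by omega⟩ := by
  simp only [nextS, Fin.mk.injEq, Fin.val_zero]
  rw [Nat.mod_eq_of_lt (by omega)]

private lemma splitE_one {d m : ℕ} (hm : 2 ≤ m) [NeZero m] (p : Fin d × Fin d)
    (k : {x : Fin m // x.1 < 0 ∨ 0 + 2 ≤ x.1} → Fin d) :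
    splitE d m hm (p, k) (nextS (0 : Fin m)) = p.2 := by
  rw [nextS_zero hm]
  simp only [splitE, Equiv.coe_fn_mk]
  rw [dif_pos (by simp)]
  simp

set_option maxHeartbeats 2000000 in
private lemma trace_marg12 {d m : ℕ} (hm : 2 ≤ m) [NeZero m]
    (h : Matrix (Fin d × Fin d) (Fin d × Fin d) ℂ)
    (ρ : Matrix (Fin m → Fin d) (Fin m → Fin d) ℂ) :
    Matrix.trace (h * marg12 ρ) = Matrix.trace (hterm d h (0 : Fin m) * ρ) := by
  classical
  have hne0 : ∀ (x : {x : Fin m // x.1 < 0 ∨ 0 + 2 ≤ x.1}), x.1 ≠ (0 : Fin m) := by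
    intro x hc
    have h2 := x.2
    rw [hc] at h2
    simp at h2
  have hne1 : ∀ (x : {x : Fin m // x.1 < 0 ∨ 0 + 2 ≤ x.1}), x.1 ≠ nextS (0 : Fin m) := by
    intro x hc
    have h2 := x.2
    rw [hc, nextS_zero hm] at h2
    simp at h2
  have hht : ∀ p q k l, hterm d h (0 : Fin m) (splitE d m hm (p, k)) (splitE d m hm (q, l))
      = if k = l then h p q else 0 := by
    intro p q k l
    simp only [hterm, Matrix.of_apply]
    by_cases hkl : k = l
    · subst hkl
      rw [if_pos, if_pos rfl]
      · rw [splitE_zero hm, splitE_zero hm, splitE_one hm, splitE_one hm]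
      · intro x hx0 hx1
        have hx2 : 2 ≤ (x:ℕ) := by
          have h0 : (x:ℕ) ≠ 0 := fun hc => hx0 (Fin.ext (by simpa using hc))
          have h1 : (x:ℕ) ≠ 1 := fun hc =>
            hx1 (by rw [nextS_zero hm]; exact Fin.ext (by simpa using hc))
          omega
        have hxm : x = (⟨x, Or.inr (by omega)⟩ : {x : Fin m // x.1 < 0 ∨ 0 + 2 ≤ x.1}).1 := rfl
        rw [hxm, splitE_out hm, splitE_out hm]
    · rw [if_neg, if_neg hkl]
      intro hall
      apply hkl
      funext x
      have h3 := hall x.1 (hne0 x) (hne1 x)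
      rwa [splitE_out hm, splitE_out hm] at h3
  have lhs : Matrix.trace (h * marg12 ρ)
      = ∑ p : Fin d × Fin d, ∑ k : {x : Fin m // x.1 < 0 ∨ 0 + 2 ≤ x.1} → Fin d,
        ∑ q : Fin d × Fin d, h p q * ρ (splitE d m hm (q, k)) (splitE d m hm (p, k)) := by
    calc Matrix.trace (h * marg12 ρ)
        = ∑ p : Fin d × Fin d, ∑ q : Fin d × Fin d, h p q * marg12 ρ q p := by
          simp [Matrix.trace, Matrix.mul_apply, Matrix.diag]
      _ = ∑ p : Fin d × Fin d, ∑ q : Fin d × Fin d,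
            ∑ k : {x : Fin m // x.1 < 0 ∨ 0 + 2 ≤ x.1} → Fin d,
            h p q * ρ (splitE d m hm (q, k)) (splitE d m hm (p, k)) := by
          refine Finset.sum_congr rfl fun p _ => Finset.sum_congr rfl fun q _ => ?_
          rw [show marg12 ρ q p = ∑ k : {x : Fin m // x.1 < 0 ∨ 0 + 2 ≤ x.1} → Fin d,
            ρ (splitE d m hm (q, k)) (splitE d m hm (p, k)) from rfl, Finset.mul_sum]
      _ = ∑ p : Fin d × Fin d, ∑ k : {x : Fin m // x.1 < 0 ∨ 0 + 2 ≤ x.1} → Fin d,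
            ∑ q : Fin d × Fin d, h p q * ρ (splitE d m hm (q, k)) (splitE d m hm (p, k)) :=
          Finset.sum_congr rfl fun p _ => Finset.sum_comm
  have rhs : Matrix.trace (hterm d h (0 : Fin m) * ρ)
      = ∑ p : Fin d × Fin d, ∑ k : {x : Fin m // x.1 < 0 ∨ 0 + 2 ≤ x.1} → Fin d,
        ∑ q : Fin d × Fin d, h p q * ρ (splitE d m hm (q, k)) (splitE d m hm (p, k)) := by
    calc Matrix.trace (hterm d h (0 : Fin m) * ρ)
        = ∑ f, ∑ g, hterm d h (0 : Fin m) f g * ρ g f := by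
          simp [Matrix.trace, Matrix.mul_apply, Matrix.diag]
      _ = ∑ z : (Fin d × Fin d) × ({x : Fin m // x.1 < 0 ∨ 0 + 2 ≤ x.1} → Fin d),
            ∑ y : (Fin d × Fin d) × ({x : Fin m // x.1 < 0 ∨ 0 + 2 ≤ x.1} → Fin d),
            hterm d h (0 : Fin m) (splitE d m hm z) (splitE d m hm y)
              * ρ (splitE d m hm y) (splitE d m hm z) :=
          (Fintype.sum_equiv (splitE d m hm) _ _ fun z =>
            (Fintype.sum_equiv (splitE d m hm)
              (fun y => hterm d h (0 : Fin m) (splitE d m hm z) (splitE d m hm y)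
                * ρ (splitE d m hm y) (splitE d m hm z))
              (fun g => hterm d h (0 : Fin m) (splitE d m hm z) g * ρ g (splitE d m hm z))
              fun y => rfl)).symm
      _ = ∑ p : Fin d × Fin d, ∑ k : {x : Fin m // x.1 < 0 ∨ 0 + 2 ≤ x.1} → Fin d,
            ∑ q : Fin d × Fin d, ∑ l : {x : Fin m // x.1 < 0 ∨ 0 + 2 ≤ x.1} → Fin d,
            (if k = l then h p q else 0) * ρ (splitE d m hm (q, l)) (splitE d m hm (p, k)) := by
          rw [Fintype.sum_prod_type]
          refine Finset.sum_congr rfl fun p _ => Finset.sum_congr rfl fun k _ => ?_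
          rw [Fintype.sum_prod_type]
          refine Finset.sum_congr rfl fun q _ => Finset.sum_congr rfl fun l _ => ?_
          rw [hht]
      _ = ∑ p : Fin d × Fin d, ∑ k : {x : Fin m // x.1 < 0 ∨ 0 + 2 ≤ x.1} → Fin d,
            ∑ q : Fin d × Fin d, h p q * ρ (splitE d m hm (q, k)) (splitE d m hm (p, k)) := by
          refine Finset.sum_congr rfl fun p _ => Finset.sum_congr rfl fun k _ =>
            Finset.sum_congr rfl fun q _ => ?_
          simp only [ite_mul, zero_mul]
          rw [Finset.sum_ite_eq]
          simp
  rw [lhs, rhs]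

set_option maxHeartbeats 2000000 in
private lemma marg_consistent {d m : ℕ} (hm : 2 ≤ m) [NeZero m]
    (ρ : Matrix (Fin m → Fin d) (Fin m → Fin d) ℂ)
    (hinv : ∀ f g : Fin m → Fin d,
      ρ (fun x => f (x + 1)) (fun x => g (x + 1)) = ρ f g) :
    margW 1 (m - 1) ρ = margW 0 (m - 1) ρ := by
  classical
  have hval1 : ((1 : Fin m) : ℕ) = 1 := by
    rw [Fin.val_one', Nat.mod_eq_of_lt (by omega)]
  haveI hU1 : Unique {x : Fin m // x.1 < 1 ∨ 1 + (m - 1) ≤ x.1} :=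
    { default := ⟨⟨0, by omega⟩, Or.inl (by show (0:ℕ) < 1; omega)⟩
      uniq := by
        rintro ⟨⟨xv, hxm⟩, hx⟩
        have hx' : xv < 1 ∨ 1 + (m - 1) ≤ xv := hx
        apply Subtype.ext
        apply Fin.ext
        show xv = 0
        omega }
  haveI hU2 : Unique {x : Fin m // x.1 < 0 ∨ 0 + (m - 1) ≤ x.1} :=
    { default := ⟨⟨m - 1, by omega⟩, Or.inr (by show 0 + (m - 1) ≤ m - 1; omega)⟩
      uniq := by
        rintro ⟨⟨xv, hxm⟩, hx⟩
        have hx' : xv < 0 ∨ 0 + (m - 1) ≤ xv := hx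
        apply Subtype.ext
        apply Fin.ext
        show xv = m - 1
        omega }
  have step1 : ∀ (F : ({x : Fin m // x.1 < 1 ∨ 1 + (m - 1) ≤ x.1} → Fin d) → ℂ),
      ∑ k, F k = ∑ a : Fin d, F (fun _ => a) := by
    intro F
    refine (Fintype.sum_equiv (Equiv.funUnique _ (Fin d)).symm
      (fun a => F (fun _ => a)) F (fun a => ?_)).symm
    exact congrArg F (funext fun s => rfl)
  have step2 : ∀ (F : ({x : Fin m // x.1 < 0 ∨ 0 + (m - 1) ≤ x.1} → Fin d) → ℂ),
      ∑ k, F k = ∑ a : Fin d, F (fun _ => a) := by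
    intro F
    refine (Fintype.sum_equiv (Equiv.funUnique _ (Fin d)).symm
      (fun a => F (fun _ => a)) F (fun a => ?_)).symm
    exact congrArg F (funext fun s => rfl)
  ext f g
  show margW 1 (m - 1) ρ f g = margW 0 (m - 1) ρ f g
  calc margW 1 (m - 1) ρ f g
      = ∑ a : Fin d,
          ρ (fun x => if h : 1 ≤ x.1 ∧ x.1 < 1 + (m - 1) then f ⟨x.1 - 1, by omega⟩ else a)
            (fun x => if h : 1 ≤ x.1 ∧ x.1 < 1 + (m - 1) then g ⟨x.1 - 1, by omega⟩ else a) :=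
        step1 (fun k => ρ
          (fun x => if h : 1 ≤ x.1 ∧ x.1 < 1 + (m - 1) then f ⟨x.1 - 1, by omega⟩
            else k ⟨x, by omega⟩)
          (fun x => if h : 1 ≤ x.1 ∧ x.1 < 1 + (m - 1) then g ⟨x.1 - 1, by omega⟩
            else k ⟨x, by omega⟩))
    _ = ∑ a : Fin d,
          ρ (fun x => if h : 0 ≤ x.1 ∧ x.1 < 0 + (m - 1) then f ⟨x.1 - 0, by omega⟩ else a)
            (fun x => if h : 0 ≤ x.1 ∧ x.1 < 0 + (m - 1) then g ⟨x.1 - 0, by omega⟩ else a) := by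
        refine Finset.sum_congr rfl fun a _ => ?_
        have hA : ∀ (u : Fin (m - 1) → Fin d) (x : Fin m),
            (if h : 0 ≤ x.1 ∧ x.1 < 0 + (m - 1) then u ⟨x.1 - 0, by omega⟩ else a)
            = (if h : 1 ≤ (x + 1).1 ∧ (x + 1).1 < 1 + (m - 1) then u ⟨(x + 1).1 - 1, by omega⟩
               else a) := by
          intro u x
          have hadd : (x + 1).1 = (x.1 + 1) % m := by rw [Fin.add_def, hval1]
          by_cases hx : x.1 < m - 1
          · have h1 : (x + 1).1 = x.1 + 1 := by
              rw [hadd, Nat.mod_eq_of_lt (by omega)]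
            rw [dif_pos ⟨Nat.zero_le _, by omega⟩, dif_pos (by omega)]
            exact congrArg u (Fin.ext (by show x.1 - 0 = (x + 1).1 - 1; omega))
          · have hx' : x.1 = m - 1 := by have := x.2; omega
            have h1 : (x + 1).1 = 0 := by
              rw [hadd, hx']
              have h2 : m - 1 + 1 = m := by omega
              rw [h2, Nat.mod_self]
            rw [dif_neg (by omega), dif_neg (by omega)]
        rw [show (fun x => if h : 0 ≤ x.1 ∧ x.1 < 0 + (m - 1) then f ⟨x.1 - 0, by omega⟩ else a)
              = (fun x : Fin m => if h : 1 ≤ (x + 1).1 ∧ (x + 1).1 < 1 + (m - 1) then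
                  f ⟨(x + 1).1 - 1, by omega⟩ else a) from funext (hA f),
            show (fun x => if h : 0 ≤ x.1 ∧ x.1 < 0 + (m - 1) then g ⟨x.1 - 0, by omega⟩ else a)
              = (fun x : Fin m => if h : 1 ≤ (x + 1).1 ∧ (x + 1).1 < 1 + (m - 1) then
                  g ⟨(x + 1).1 - 1, by omega⟩ else a) from funext (hA g)]
        exact (hinv _ _).symm
    _ = margW 0 (m - 1) ρ f g :=
        (step2 (fun k => ρ
          (fun x => if h : 0 ≤ x.1 ∧ x.1 < 0 + (m - 1) then f ⟨x.1 - 0, by omega⟩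
            else k ⟨x, by omega⟩)
          (fun x => if h : 0 ≤ x.1 ∧ x.1 < 0 + (m - 1) then g ⟨x.1 - 0, by omega⟩
            else k ⟨x, by omega⟩))).symm

private def shiftE (d : ℕ) {m : ℕ} [NeZero m] (s : Fin m) :
    (Fin m → Fin d) ≃ (Fin m → Fin d) where
  toFun f := fun x => f (x + s)
  invFun f := fun x => f (x - s)
  left_inv f := funext fun x => congrArg f (sub_add_cancel x s)
  right_inv f := funext fun x => congrArg f (add_sub_cancel_right x s)

private lemma psd_real_smul {n : Type*} [Fintype n] [DecidableEq n] {A : Matrix n n ℂ}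
    (hA : A.PosSemidef) {r : ℝ} (hr : 0 ≤ r) : (r • A).PosSemidef := by
  refine Matrix.PosSemidef.of_dotProduct_mulVec_nonneg ?_ ?_
  · show (r • A)ᴴ = r • A
    rw [Matrix.conjTranspose_smul, star_trivial, hA.1.eq]
  · intro x
    have h1 := Complex.nonneg_iff.mp (hA.dotProduct_mulVec_nonneg x)
    rw [Matrix.smul_mulVec, dotProduct_smul, Complex.real_smul,
      Complex.nonneg_iff]
    constructor
    · rw [Complex.re_ofReal_mul]
      exact mul_nonneg hr h1.1
    · rw [Complex.im_ofReal_mul, ← h1.2, mul_zero]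

end AuxLemmas

set_option maxHeartbeats 2000000 in
/-- **Periodic ground energy density lower-bounds the translation-invariant relaxation**:
for a Hermitian two-site interaction `h` on `ℂ^d ⊗ ℂ^d` and the periodic-chain Hamiltonian
`H_m = Σ_{i=1}^m h_{i,i+1}` on `(ℂ^d)^{⊗m}` (site `m+1` identified with site `1`),
`(1/m)·λ_min(H_m) ≥ E_m`. -/
theorem periodic_ground_energy_ge_Em {d m : ℕ} (hd : 0 < d) (hm : 2 ≤ m)
    (h : Matrix (Fin d × Fin d) (Fin d × Fin d) ℂ) (hh : h.IsHermitian) :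
    Em d m h ≤ (1 / (m : ℝ)) * lamMin (∑ i : Fin m, hterm d h i) := by
  classical
  haveI : NeZero m := ⟨by omega⟩
  haveI : Nonempty (Fin d) := ⟨⟨0, hd⟩⟩
  -- the Hamiltonian is Hermitian
  have hH : (∑ i : Fin m, hterm d h i).IsHermitian := by
    show (∑ i : Fin m, hterm d h i)ᴴ = ∑ i : Fin m, hterm d h i
    rw [Matrix.conjTranspose_sum]
    exact Finset.sum_congr rfl fun i _ => hterm_herm hh i
  -- ground state
  obtain ⟨i₀, hi₀⟩ := exists_eq_ciInf_of_finite (f := hH.eigenvalues)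
  set lam : ℝ := hH.eigenvalues i₀ with hlamdef
  have hlamMin : lamMin (∑ i : Fin m, hterm d h i) = lam := by
    simp only [lamMin, dif_pos hH]
    exact hi₀.symm
  set w : (Fin m → Fin d) → ℂ := ⇑(hH.eigenvectorBasis i₀) with hwdef
  have hw : (∑ i : Fin m, hterm d h i) *ᵥ w = lam • w := hH.mulVec_eigenvectorBasis i₀
  have hnorm : ‖hH.eigenvectorBasis i₀‖ = 1 := hH.eigenvectorBasis.orthonormal.1 i₀
  have hw1 : ∑ f, (starRingEnd ℂ) (w f) * w f = 1 := by
    have h3 := hnorm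
    rw [EuclideanSpace.norm_eq] at h3
    have h4 : ∑ f, ‖w f‖ ^ 2 = 1 := Real.sqrt_eq_one.mp h3
    calc ∑ f, (starRingEnd ℂ) (w f) * w f
        = ∑ f, ((‖w f‖ ^ 2 : ℝ) : ℂ) := by
          refine Finset.sum_congr rfl fun f _ => ?_
          rw [mul_comm, Complex.mul_conj, Complex.normSq_eq_norm_sq]
      _ = ((∑ f, ‖w f‖ ^ 2 : ℝ) : ℂ) := by
          rw [Complex.ofReal_sum]
      _ = 1 := by rw [h4, Complex.ofReal_one]
  -- the rank one ground state projector
  set ρ₀ : Matrix (Fin m → Fin d) (Fin m → Fin d) ℂ := Matrix.vecMulVec w (star w) with hρ₀def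
  have hρ₀app : ∀ f g, ρ₀ f g = w f * (starRingEnd ℂ) (w g) := by
    intro f g
    rw [hρ₀def, Matrix.vecMulVec_apply]
    rfl
  have hρ₀psd : ρ₀.PosSemidef := by
    refine Matrix.PosSemidef.of_dotProduct_mulVec_nonneg ?_ ?_
    · show ρ₀ᴴ = ρ₀
      ext f g
      rw [Matrix.conjTranspose_apply, hρ₀app, hρ₀app]
      simp [mul_comm]
    · intro x
      have hz : dotProduct (star x) (ρ₀ *ᵥ x)
          = star (∑ g, (starRingEnd ℂ) (w g) * x g) * (∑ g, (starRingEnd ℂ) (w g) * x g) := by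
        calc dotProduct (star x) (ρ₀ *ᵥ x)
            = ∑ f, ∑ g, ((starRingEnd ℂ) (x f) * w f) * ((starRingEnd ℂ) (w g) * x g) := by
              simp only [dotProduct, Matrix.mulVec, Pi.star_apply, Finset.mul_sum]
              refine Finset.sum_congr rfl fun f _ => Finset.sum_congr rfl fun g _ => ?_
              rw [hρ₀app]
              simp only [Complex.star_def]
              ring
          _ = (∑ f, (starRingEnd ℂ) (x f) * w f) * (∑ g, (starRingEnd ℂ) (w g) * x g) :=
              (Finset.sum_mul_sum _ _ _ _).symm
          _ = star (∑ g, (starRingEnd ℂ) (w g) * x g) * (∑ g, (starRingEnd ℂ) (w g) * x g) := by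
              congr 1
              rw [star_sum]
              refine Finset.sum_congr rfl fun g _ => ?_
              simp only [star_mul', Complex.star_def, Complex.conj_conj, RingHomCompTriple.comp_apply,
                RingHom.id_apply]
              ring
      rw [hz]
      exact star_mul_self_nonneg _
  have htrρ₀ : ρ₀.trace = 1 := by
    rw [Matrix.trace]
    calc ∑ f, ρ₀.diag f = ∑ f, (starRingEnd ℂ) (w f) * w f := by
          refine Finset.sum_congr rfl fun f _ => ?_
          rw [Matrix.diag_apply, hρ₀app, mul_comm]
      _ = 1 := hw1
  -- energy of the ground state
  have htrH : Matrix.trace ((∑ i : Fin m, hterm d h i) * ρ₀) = (lam : ℂ) := by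
    calc Matrix.trace ((∑ i : Fin m, hterm d h i) * ρ₀)
        = ∑ f, (starRingEnd ℂ) (w f) * ((∑ i : Fin m, hterm d h i) *ᵥ w) f := by
          simp only [Matrix.trace, Matrix.diag, Matrix.mul_apply, Matrix.mulVec,
            dotProduct, Finset.mul_sum]
          refine Finset.sum_congr rfl fun f _ => Finset.sum_congr rfl fun g _ => ?_
          rw [hρ₀app]
          ring
      _ = ∑ f, (starRingEnd ℂ) (w f) * ((lam : ℂ) * w f) := by
          rw [hw]
          refine Finset.sum_congr rfl fun f _ => ?_
          rw [Pi.smul_apply, Complex.real_smul]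
      _ = (lam : ℂ) * ∑ f, (starRingEnd ℂ) (w f) * w f := by
          rw [Finset.mul_sum]
          exact Finset.sum_congr rfl fun f _ => by ring
      _ = (lam : ℂ) := by rw [hw1, mul_one]
  -- translated copies of the ground state
  set ρt : Fin m → Matrix (Fin m → Fin d) (Fin m → Fin d) ℂ :=
    fun t => ρ₀.submatrix (shiftE d t) (shiftE d t) with hρtdef
  set ρc : Matrix (Fin m → Fin d) (Fin m → Fin d) ℂ :=
    (m : ℝ)⁻¹ • ∑ t : Fin m, ρt t with hρcdef
  have hρtapp : ∀ t f g, ρt t f g = ρ₀ (fun x => f (x + t)) (fun x => g (x + t)) := by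
    intro t f g
    rw [hρtdef]
    rfl
  have hsumpsd : (∑ t : Fin m, ρt t).PosSemidef := by
    refine Finset.sum_induction _ _ (fun a b ha hb => ha.add hb) Matrix.PosSemidef.zero
      (fun t _ => ?_)
    rw [hρtdef]
    exact hρ₀psd.submatrix _
  have hρcpsd : ρc.PosSemidef := by
    rw [hρcdef]
    exact psd_real_smul hsumpsd (by positivity)
  have htrρt : ∀ t, (ρt t).trace = 1 := by
    intro t
    have : (ρt t).trace = ρ₀.trace := by
      simp only [Matrix.trace, Matrix.diag]
      refine Fintype.sum_equiv (shiftE d t) _ _ fun f => ?_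
      rw [hρtapp]
      rfl
    rw [this, htrρ₀]
  have hmne : ((m : ℝ) : ℂ) ≠ 0 := by
    simp only [ne_eq, Complex.ofReal_natCast, Nat.cast_eq_zero]
    omega
  have htrρc : ρc.trace = 1 := by
    rw [hρcdef, Matrix.trace_smul, Matrix.trace_sum]
    rw [Finset.sum_congr rfl fun t _ => htrρt t]
    rw [Finset.sum_const, Finset.card_univ, Fintype.card_fin, nsmul_eq_mul, mul_one]
    rw [Complex.real_smul, Complex.ofReal_inv]
    rw [show ((m : ℕ) : ℂ) = (((m : ℕ) : ℝ) : ℂ) by push_cast; rfl]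
    exact inv_mul_cancel₀ hmne
  -- translation invariance of ρc
  have hshiftinv : ∀ f g : Fin m → Fin d,
      ρc (fun x => f (x + 1)) (fun x => g (x + 1)) = ρc f g := by
    intro f g
    rw [hρcdef]
    simp only [Matrix.smul_apply, Matrix.sum_apply]
    congr 1
    rw [Finset.sum_congr rfl (fun t (_ : t ∈ Finset.univ) => show
        ρt t (fun x => f (x + 1)) (fun x => g (x + 1)) = ρt (t + 1) f g by
      rw [hρtapp, hρtapp]
      have hc : ∀ (u : Fin m → Fin d),
          (fun x : Fin m => u ((x + t) + 1)) = (fun x : Fin m => u (x + (t + 1))) := by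
        intro u
        funext x
        rw [add_assoc]
      rw [hc f, hc g])]
    exact Fintype.sum_equiv (Equiv.addRight 1) _ _ fun t => by
      rw [Equiv.coe_addRight]
  have hmargEq : margW 1 (m - 1) ρc = margW 0 (m - 1) ρc := marg_consistent hm ρc hshiftinv
  -- the energy of ρc
  have hmul : ∀ t : Fin m, Matrix.trace (hterm d h (0 : Fin m) * ρt t)
      = Matrix.trace (hterm d h (-t) * ρ₀) := by
    intro t
    have hcanc : ∀ (u : Fin m → Fin d),
        (fun x : Fin m => u ((x + t) + -t)) = u := by
      intro u
      funext x
      rw [add_neg_cancel_right]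
    calc Matrix.trace (hterm d h (0 : Fin m) * ρt t)
        = ∑ f, ∑ g, hterm d h (0 : Fin m) f g
            * ρ₀ (fun x => g (x + t)) (fun x => f (x + t)) := by
          simp only [Matrix.trace, Matrix.diag, Matrix.mul_apply]
          refine Finset.sum_congr rfl fun f _ => Finset.sum_congr rfl fun g _ => ?_
          rw [hρtapp]
      _ = ∑ u, ∑ v, hterm d h (-t) u v * ρ₀ v u := by
          refine (Fintype.sum_equiv (shiftE d (-t)) _ _ fun u => ?_).symm
          refine Fintype.sum_equiv (shiftE d (-t)) _ _ fun v => ?_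
          simp only [shiftE, Equiv.coe_fn_mk]
          rw [hterm_cov hm h (0 : Fin m) (-t) u v, zero_add, hcanc u, hcanc v]
      _ = Matrix.trace (hterm d h (-t) * ρ₀) := by
          simp only [Matrix.trace, Matrix.diag, Matrix.mul_apply]
  have hEval : Matrix.trace (h * marg12 ρc) = (((m : ℝ)⁻¹ : ℝ) : ℂ) * (lam : ℂ) := by
    rw [trace_marg12 hm h ρc, hρcdef]
    rw [Matrix.mul_smul, Matrix.trace_smul, Matrix.mul_sum, Matrix.trace_sum]
    rw [Finset.sum_congr rfl fun t _ => hmul t]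
    have hneg : ∑ t : Fin m, Matrix.trace (hterm d h (-t) * ρ₀)
        = ∑ i : Fin m, Matrix.trace (hterm d h i * ρ₀) :=
      Fintype.sum_equiv (Equiv.neg (Fin m)) _ _ (fun t => by rw [Equiv.neg_apply])
    rw [hneg, ← Matrix.trace_sum, ← Matrix.sum_mul, htrH, Complex.real_smul]
  -- conclusion
  have hbdd : BddBelow { x : ℝ | ∃ ρ : Matrix (Fin m → Fin d) (Fin m → Fin d) ℂ,
      IsDensityOp ρ ∧ margW 1 (m - 1) ρ = margW 0 (m - 1) ρ ∧
      x = (Matrix.trace (h * marg12 ρ)).re } := by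
    refine ⟨lamMin (hterm d h (0 : Fin m)), fun x hx => ?_⟩
    obtain ⟨ρ', hρ', hm', rfl⟩ := hx
    rw [trace_marg12 hm h ρ']
    exact lamMin_le_trace_re (hterm_herm hh (0 : Fin m)) hρ'
  have hmem : ((m : ℝ)⁻¹ * lam) ∈ { x : ℝ | ∃ ρ : Matrix (Fin m → Fin d) (Fin m → Fin d) ℂ,
      IsDensityOp ρ ∧ margW 1 (m - 1) ρ = margW 0 (m - 1) ρ ∧
      x = (Matrix.trace (h * marg12 ρ)).re } := by
    refine ⟨ρc, ⟨hρcpsd, htrρc⟩, hmargEq, ?_⟩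
    rw [hEval, Complex.re_ofReal_mul, Complex.ofReal_re]
  calc Em d m h ≤ (m : ℝ)⁻¹ * lam := csInf_le hbdd hmem
    _ = 1 / (m : ℝ) * lamMin (∑ i : Fin m, hterm d h i) := by
      rw [hlamMin, one_div]
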